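/- Let M ∈ ℝ^{3×3} have singular value decomposition M = U Σ Vᵀ with det(U Vᵀ) = 1. Then R = U Vᵀ minimizes the Frobenius norm ‖R - M‖_F over all rotation matrices R ∈ SO(3). -/
import Mathlib


open Matrix

/-- If `M = U S Vᵀ` is an SVD of `M` with `det (U Vᵀ) = 1`, then `R = U Vᵀ` minimizes the
Frobenius norm `‖R - M‖_F` over all rotations `R ∈ SO(3)`. -/
theorem svd_projection_onto_SO3
    (M U V S : Matrix (Fin 3) (Fin 3) ℝ) (σ : Fin 3 → ℝ)
    (hU : Uᵀ * U = 1) (hV : Vᵀ * V = 1)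
    (hS : S = Matrix.diagonal σ) (hσ : ∀ i, 0 ≤ σ i)
    (hM : M = U * S * Vᵀ) (hdet : (U * Vᵀ).det = 1) :
    ∀ R : Matrix (Fin 3) (Fin 3) ℝ, Rᵀ * R = 1 → R.det = 1 →
      ∑ i, ∑ j, ((U * Vᵀ) i j - M i j) ^ 2 ≤ ∑ i, ∑ j, (R i j - M i j) ^ 2 := by
  intro R hR hRdet
  have hdot : ∀ A : Matrix (Fin 3) (Fin 3) ℝ,
      (∑ i, ∑ j, A i j * M i j) = Matrix.trace (Aᵀ * M) := by
    intro A
    rw [Matrix.trace]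
    simp only [Matrix.diag, Matrix.mul_apply, Matrix.transpose_apply]
    rw [Finset.sum_comm]
  have hnorm : ∀ A : Matrix (Fin 3) (Fin 3) ℝ, Aᵀ * A = 1 →
      (∑ i, ∑ j, A i j ^ 2) = 3 := by
    intro A hA
    have h1 : (∑ i, ∑ j, A i j ^ 2) = Matrix.trace (Aᵀ * A) := by
      rw [Matrix.trace]
      simp only [Matrix.diag, Matrix.mul_apply, Matrix.transpose_apply, sq]
      rw [Finset.sum_comm]
    rw [h1, hA]
    simp [Matrix.trace]
  have expand : ∀ A : Matrix (Fin 3) (Fin 3) ℝ, Aᵀ * A = 1 →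
      (∑ i, ∑ j, (A i j - M i j) ^ 2)
        = 3 - 2 * Matrix.trace (Aᵀ * M) + ∑ i, ∑ j, M i j ^ 2 := by
    intro A hA
    have e1 : (∑ i, ∑ j, (A i j - M i j) ^ 2)
        = (∑ i, ∑ j, A i j ^ 2) - 2 * (∑ i, ∑ j, A i j * M i j)
          + ∑ i, ∑ j, M i j ^ 2 := by
      simp only [Fin.sum_univ_three]; ring
    rw [e1, hnorm A hA, hdot]
  have hUV : (U * Vᵀ)ᵀ * (U * Vᵀ) = 1 := by
    rw [Matrix.transpose_mul, Matrix.transpose_transpose, Matrix.mul_assoc,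
      ← Matrix.mul_assoc Uᵀ U Vᵀ, hU, Matrix.one_mul]
    exact mul_eq_one_comm.mp hV
  -- trace for UVᵀ
  have htrUV : Matrix.trace ((U * Vᵀ)ᵀ * M) = ∑ i, σ i := by
    rw [hM, hS, Matrix.transpose_mul, Matrix.transpose_transpose]
    have : V * Uᵀ * (U * Matrix.diagonal σ * Vᵀ)
        = V * Matrix.diagonal σ * Vᵀ := by
      rw [Matrix.mul_assoc, ← Matrix.mul_assoc Uᵀ, ← Matrix.mul_assoc Uᵀ U, hU,
        Matrix.one_mul, ← Matrix.mul_assoc]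
    rw [this, Matrix.mul_assoc, Matrix.trace_mul_comm, Matrix.mul_assoc, hV, Matrix.mul_one,
      Matrix.trace_diagonal]
  -- trace bound for R
  set Q : Matrix (Fin 3) (Fin 3) ℝ := Vᵀ * Rᵀ * U with hQdef
  have hQ : Qᵀ * Q = 1 := by
    have hVV : V * Vᵀ = 1 := mul_eq_one_comm.mp hV
    have hRR : R * Rᵀ = 1 := mul_eq_one_comm.mp hR
    simp only [hQdef, Matrix.transpose_mul, Matrix.transpose_transpose, Matrix.mul_assoc]
    rw [← Matrix.mul_assoc V Vᵀ, hVV, Matrix.one_mul, ← Matrix.mul_assoc R Rᵀ, hRR,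
      Matrix.one_mul, hU]
  have hQdiag : ∀ i, Q i i ≤ 1 := by
    intro i
    have h1 : (∑ j, Q j i ^ 2) = 1 := by
      have := congrFun (congrFun hQ i) i
      simp only [Matrix.mul_apply, Matrix.transpose_apply, Matrix.one_apply_eq, sq] at this ⊢
      exact this
    have h2 : Q i i ^ 2 ≤ ∑ j, Q j i ^ 2 :=
      Finset.single_le_sum (f := fun j => Q j i ^ 2) (fun j _ => sq_nonneg _)
        (Finset.mem_univ i)
    rw [h1] at h2
    nlinarith [h2]
  have htrR : Matrix.trace (Rᵀ * M) ≤ ∑ i, σ i := by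
    have e : Matrix.trace (Rᵀ * M) = ∑ i, Q i i * σ i := by
      rw [hM, hS, ← Matrix.mul_assoc, ← Matrix.mul_assoc, Matrix.trace_mul_comm,
        ← Matrix.mul_assoc, ← Matrix.mul_assoc, Matrix.trace]
      simp [Matrix.diag, Matrix.mul_diagonal, hQdef]
    rw [e]
    apply Finset.sum_le_sum
    intro i _
    calc Q i i * σ i ≤ 1 * σ i := mul_le_mul_of_nonneg_right (hQdiag i) (hσ i)
      _ = σ i := one_mul _
  rw [expand _ hUV, expand _ hR, htrUV]
  linarith [htrR]
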